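/- arXiv:1410.6020 — 7 statements merged into one kernel-verified Lean document; each statement's English description precedes it below -/
import Mathlib

section
/- Let (Ω, 𝓕, P) be a probability space, let b, u : List ℕ → Ω → ℝ be (arbitrary) families of functions, and for each vaccination function α : ℝ → [0,1] define the random pruned tree kept_α(ω) ⊆ List ℕ pointwise from b(·)(ω) and u(·)(ω). Let f : Set (List ℕ) → [0,∞] be monotone with respect to set inclusion (S ⊆ S' implies f(S) ≤ f(S')). Then for all α, α' : ℝ → [0,1] with α ≼ α', the lower Lebesgue integrals satisfy ∫⁻ f(kept_{α'}(ω)) dP(ω) ≤ ∫⁻ f(kept_α(ω)) dP(ω). (This is the stochastic monotonicity of means, Theorem 1 of the paper, for functions monotonically decreasing with pruning.) -/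
open MeasureTheory
open scoped ENNReal

/-- Coupled pruning: the set of Ulam–Harris individuals surviving pruning by the
vaccination function `α`, given birth times `b` and marks `u`. -/
def kept (b u : List ℕ → ℝ) (α : ℝ → ℝ) : Set (List ℕ) :=
  {i : List ℕ | ∀ j : List ℕ, j ≠ [] → j <+: i → α (b j) < u j}

/-- Stochastic monotonicity of means (Theorem 1 of the paper): for a monotone
`f : Set (List ℕ) → [0,∞]` and vaccination functions `α ≼ α'`, the lower Lebesgue
integral of `f` applied to the random pruned tree is smaller for `α'` than for `α`. -/
theorem lintegral_kept_antitone {Ω : Type*} [MeasurableSpace Ω]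
    (P : Measure Ω) [IsProbabilityMeasure P]
    (b u : List ℕ → Ω → ℝ)
    (f : Set (List ℕ) → ℝ≥0∞) (hf : Monotone f)
    (α α' : ℝ → ℝ)
    (hα : ∀ t, α t ∈ Set.Icc (0 : ℝ) 1) (hα' : ∀ t, α' t ∈ Set.Icc (0 : ℝ) 1)
    (hle : ∀ t, α t ≤ α' t) :
    ∫⁻ ω, f (kept (fun i => b i ω) (fun i => u i ω) α') ∂P ≤
      ∫⁻ ω, f (kept (fun i => b i ω) (fun i => u i ω) α) ∂P := by
  refine lintegral_mono fun ω => hf fun i hi j hj hpre => ?_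
  exact lt_of_le_of_lt (hle _) (hi j hj hpre)
end

section
/- Let v : ℝ → ℝ be nondecreasing and right-continuous, let p ∈ (0,1), suppose the set {x ≥ 0 : p ≤ v(x)} is nonempty, and set x_p = sInf {x ≥ 0 : p ≤ v(x)}. Let (v_n) be a sequence of nondecreasing right-continuous functions ℝ → ℝ such that v(x) ≤ v_n(x) for all n and all x, and such that sup_{x ∈ ℝ} |v_n(x) − v(x)| → 0 as n → ∞. Then for every n the set {x ≥ 0 : p ≤ v_n(x)} is nonempty, and the quantiles x_{n,p} = sInf {x ≥ 0 : p ≤ v_n(x)} satisfy x_{n,p} → x_p as n → ∞. -/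
open Filter

/-- Quantile convergence (Theorem 4(b), case (i), of the paper): if `v` is a nondecreasing
right-continuous function, `p ∈ (0,1)`, the quantile set of `v` is nonempty, and `(vₙ)` is a
sequence of nondecreasing right-continuous functions dominating `v` pointwise and converging
uniformly to `v`, then all the quantile sets of the `vₙ` are nonempty and the quantiles of
order `p` of the `vₙ` converge to that of `v`. -/
theorem quantile_tendsto_of_dominating (v : ℝ → ℝ) (hmono : Monotone v)
    (hrc : ∀ x : ℝ, ContinuousWithinAt v (Set.Ici x) x)
    (p : ℝ) (hp : p ∈ Set.Ioo (0 : ℝ) 1)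
    (hne : {x : ℝ | 0 ≤ x ∧ p ≤ v x}.Nonempty)
    (vn : ℕ → ℝ → ℝ) (hmono' : ∀ n, Monotone (vn n))
    (hrc' : ∀ n, ∀ x : ℝ, ContinuousWithinAt (vn n) (Set.Ici x) x)
    (hle : ∀ n, ∀ x : ℝ, v x ≤ vn n x)
    (hunif : TendstoUniformly vn v atTop) :
    (∀ n, {x : ℝ | 0 ≤ x ∧ p ≤ vn n x}.Nonempty) ∧
      Tendsto (fun n => sInf {x : ℝ | 0 ≤ x ∧ p ≤ vn n x}) atTop
        (nhds (sInf {x : ℝ | 0 ≤ x ∧ p ≤ v x})) := by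
  set S : Set ℝ := {x : ℝ | 0 ≤ x ∧ p ≤ v x} with hS
  have hsub : ∀ n, S ⊆ {x : ℝ | 0 ≤ x ∧ p ≤ vn n x} := fun n x hx =>
    ⟨hx.1, hx.2.trans (hle n x)⟩
  have hne' : ∀ n, {x : ℝ | 0 ≤ x ∧ p ≤ vn n x}.Nonempty := fun n =>
    hne.mono (hsub n)
  have hbdd : ∀ n, BddBelow {x : ℝ | 0 ≤ x ∧ p ≤ vn n x} := fun n =>
    ⟨0, fun x hx => hx.1⟩
  have hbddS : BddBelow S := ⟨0, fun x hx => hx.1⟩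
  set xp : ℝ := sInf S with hxp
  have hxp0 : 0 ≤ xp := le_csInf hne fun x hx => hx.1
  have hupper : ∀ n, sInf {x : ℝ | 0 ≤ x ∧ p ≤ vn n x} ≤ xp :=
    fun n => csInf_le_csInf (hbdd n) hne (hsub n)
  have hlower0 : ∀ n, 0 ≤ sInf {x : ℝ | 0 ≤ x ∧ p ≤ vn n x} :=
    fun n => le_csInf (hne' n) fun x hx => hx.1
  refine ⟨hne', Metric.tendsto_atTop.2 fun ε hε => ?_⟩
  by_cases hcase : xp < ε
  · refine ⟨0, fun n _ => ?_⟩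
    rw [Real.dist_eq, abs_lt]
    constructor
    · have := hlower0 n
      linarith
    · have := hupper n
      linarith
  · push_neg at hcase
    have hεle : 0 ≤ xp - ε / 2 := by linarith
    have hlt : xp - ε / 2 < xp := by linarith
    have hv : v (xp - ε / 2) < p := by
      by_contra h
      push_neg at h
      exact absurd (csInf_le hbddS ⟨hεle, h⟩) (not_le.2 hlt)
    set δ : ℝ := p - v (xp - ε / 2) with hδ
    have hδ0 : 0 < δ := by simp [hδ]; linarith
    obtain ⟨N, hN⟩ := (Metric.tendstoUniformly_iff.1 hunif δ hδ0).exists_forall_of_atTop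
    refine ⟨N, fun n hn => ?_⟩
    have hvn : vn n (xp - ε / 2) < p := by
      have := hN n hn (xp - ε / 2)
      rw [Real.dist_eq, abs_lt] at this
      have := this.1
      simp only [hδ] at this ⊢
      linarith
    have hlb : xp - ε / 2 ≤ sInf {x : ℝ | 0 ≤ x ∧ p ≤ vn n x} := by
      refine le_csInf (hne' n) fun x hx => ?_
      by_contra h
      push_neg at h
      exact absurd (hx.2.trans_lt (lt_of_le_of_lt (hmono' n h.le) hvn)) (lt_irrefl p)
    rw [Real.dist_eq, abs_lt]
    have := hupper n
    constructor <;> linarith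
end

section
/- Let v : ℝ → ℝ be nondecreasing and right-continuous, let p ∈ (0,1), suppose the set {x ≥ 0 : p ≤ v(x)} is nonempty, and set x_p = sInf {x ≥ 0 : p ≤ v(x)}. Assume v is continuous at x_p and strictly increasing at x_p in the sense that v(x) > p for every x > x_p. Let (v_n) be any sequence of nondecreasing right-continuous functions ℝ → ℝ with sup_{x ∈ ℝ} |v_n(x) − v(x)| → 0 as n → ∞. Then for every ε > 0 there exists n₀ such that for all n ≥ n₀ the set {x ≥ 0 : p ≤ v_n(x)} is nonempty and its infimum x_{n,p} satisfies |x_{n,p} − x_p| ≤ ε; i.e. x_{n,p} → x_p. -/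
open Filter

/-- Quantile convergence (Theorem 4(b), case (ii), of the paper): if `v` is a nondecreasing
right-continuous function, `p ∈ (0,1)`, the quantile set of `v` is nonempty with infimum
`x_p`, `v` is continuous at `x_p` and strictly increasing at `x_p` (in the sense that
`v x > p` for every `x > x_p`), and `(vₙ)` is any sequence of nondecreasing right-continuous
functions converging uniformly to `v`, then eventually the quantile sets of the `vₙ` are
nonempty and their infima converge to `x_p`. -/
theorem quantile_tendsto_of_continuousAt (v : ℝ → ℝ) (hmono : Monotone v)
    (hrc : ∀ x : ℝ, ContinuousWithinAt v (Set.Ici x) x)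
    (p : ℝ) (hp : p ∈ Set.Ioo (0 : ℝ) 1)
    (hne : {x : ℝ | 0 ≤ x ∧ p ≤ v x}.Nonempty)
    (xp : ℝ) (hxp : xp = sInf {x : ℝ | 0 ≤ x ∧ p ≤ v x})
    (hcont : ContinuousAt v xp)
    (hstrict : ∀ x : ℝ, xp < x → p < v x)
    (vn : ℕ → ℝ → ℝ) (hmono' : ∀ n, Monotone (vn n))
    (hrc' : ∀ n, ∀ x : ℝ, ContinuousWithinAt (vn n) (Set.Ici x) x)
    (hunif : TendstoUniformly vn v atTop) :
    ∀ ε > (0 : ℝ), ∃ n₀ : ℕ, ∀ n ≥ n₀,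
      {x : ℝ | 0 ≤ x ∧ p ≤ vn n x}.Nonempty ∧
        |sInf {x : ℝ | 0 ≤ x ∧ p ≤ vn n x} - xp| ≤ ε := by
  intro ε hε
  have hxp0 : 0 ≤ xp := hxp ▸ le_csInf hne fun x hx => hx.1
  have h1 : p < v (xp + ε) := hstrict _ (by linarith)
  set η1 : ℝ := v (xp + ε) - p with hη1def
  have hη1 : 0 < η1 := by simp [hη1def]; linarith
  -- lower bound level η2 (only meaningful when ε < xp)
  by_cases hcase : xp ≤ ε
  · -- lower bound trivial since sInf ≥ 0 ≥ xp - ε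
    have hev := (Metric.tendstoUniformly_iff.mp hunif η1 hη1)
    rw [eventually_atTop] at hev
    obtain ⟨n₀, hn₀⟩ := hev
    refine ⟨n₀, fun n hn => ?_⟩
    have hd := hn₀ n hn (xp + ε)
    rw [Real.dist_eq, abs_lt] at hd
    have hmem : (xp + ε) ∈ {x : ℝ | 0 ≤ x ∧ p ≤ vn n x} :=
      ⟨by linarith, by linarith [hd.1]⟩
    have hbdd : BddBelow {x : ℝ | 0 ≤ x ∧ p ≤ vn n x} := ⟨0, fun x hx => hx.1⟩
    refine ⟨⟨_, hmem⟩, ?_⟩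
    have hle : sInf {x : ℝ | 0 ≤ x ∧ p ≤ vn n x} ≤ xp + ε := csInf_le hbdd hmem
    have hge : 0 ≤ sInf {x : ℝ | 0 ≤ x ∧ p ≤ vn n x} :=
      le_csInf ⟨_, hmem⟩ fun x hx => hx.1
    rw [abs_le]; constructor <;> linarith
  · push_neg at hcase
    have hxe0 : 0 ≤ xp - ε := by linarith
    have h2 : v (xp - ε) < p := by
      by_contra h
      push_neg at h
      have h3 := csInf_le (⟨0, fun x hx => hx.1⟩ : BddBelow {x : ℝ | 0 ≤ x ∧ p ≤ v x}) ⟨hxe0, h⟩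
      rw [← hxp] at h3
      linarith
    set η2 : ℝ := p - v (xp - ε) with hη2def
    have hη2 : 0 < η2 := by simp [hη2def]; linarith
    have hev := (Metric.tendstoUniformly_iff.mp hunif (min η1 η2) (lt_min hη1 hη2))
    rw [eventually_atTop] at hev
    obtain ⟨n₀, hn₀⟩ := hev
    refine ⟨n₀, fun n hn => ?_⟩
    have hd := hn₀ n hn (xp + ε)
    rw [Real.dist_eq, abs_lt] at hd
    have hd1 : v (xp + ε) - vn n (xp + ε) < η1 := lt_of_lt_of_le hd.2 (min_le_left _ _)
    have hmem : (xp + ε) ∈ {x : ℝ | 0 ≤ x ∧ p ≤ vn n x} :=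
      ⟨by linarith, by linarith⟩
    have hbdd : BddBelow {x : ℝ | 0 ≤ x ∧ p ≤ vn n x} := ⟨0, fun x hx => hx.1⟩
    refine ⟨⟨_, hmem⟩, ?_⟩
    have hle : sInf {x : ℝ | 0 ≤ x ∧ p ≤ vn n x} ≤ xp + ε := csInf_le hbdd hmem
    have hge : xp - ε ≤ sInf {x : ℝ | 0 ≤ x ∧ p ≤ vn n x} := by
      refine le_csInf ⟨_, hmem⟩ fun x hx => ?_
      by_contra hlt
      push_neg at hlt
      have hd2 := hn₀ n hn (xp - ε)
      rw [Real.dist_eq, abs_lt] at hd2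
      have hvnlt : vn n (xp - ε) < p := by
        have ha := hd2.1
        have hb := min_le_right η1 η2
        simp only [hη2def] at *
        linarith
      have : vn n x ≤ vn n (xp - ε) := hmono' n hlt.le
      have := hx.2
      linarith
    rw [abs_le]; constructor <;> linarith
end

section
/- In the coupling setting, let α, α' : ℝ → [0,1] be measurable and let δ ∈ [0,1] satisfy |α(t) − α'(t)| ≤ δ for all t ∈ ℝ. Then the probability of the complement of the agreement event satisfies P(B(α,α')ᶜ) ≤ 1 − E[(1−δ)^N]. -/
open MeasureTheory ProbabilityTheory
open scoped ENNReal

/-- The agreement event `B(α,α')` of the coupling construction: no mark `Uᵢ`, `i < N`, falls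
in the interval `(min(α(bᵢ), α'(bᵢ)), max(α(bᵢ), α'(bᵢ))]`. -/
def agreeEvent {Ω : Type*} (N : Ω → ℕ) (b U : ℕ → Ω → ℝ) (α α' : ℝ → ℝ) : Set Ω :=
  {ω | ∀ i < N ω,
    U i ω ∉ Set.Ioc (min (α (b i ω)) (α' (b i ω))) (max (α (b i ω)) (α' (b i ω)))}

private lemma aux_key {Ω : Type*} [MeasurableSpace Ω]
    (P : Measure Ω) [IsProbabilityMeasure P]
    (N : Ω → ℕ) (hN : Measurable N)
    (b : ℕ → Ω → ℝ) (hb : ∀ i, Measurable (b i))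
    (U : ℕ → Ω → ℝ) (hUmeas : ∀ i, Measurable (U i))
    (hUindep : iIndepFun U P)
    (hUunif : ∀ i, P.map (U i) = (volume : Measure ℝ).restrict (Set.Icc 0 1))
    (hUindepNb : Indep (⨆ i, MeasurableSpace.comap (U i) inferInstance)
      (MeasurableSpace.comap N inferInstance ⊔ ⨆ i, MeasurableSpace.comap (b i) inferInstance)
      P)
    (α α' : ℝ → ℝ) (hαm : Measurable α) (hα'm : Measurable α')
    (hα : ∀ t, α t ∈ Set.Icc (0 : ℝ) 1) (hα' : ∀ t, α' t ∈ Set.Icc (0 : ℝ) 1)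
    (δ : ℝ) (hδ : δ ∈ Set.Icc (0 : ℝ) 1) (hdiff : ∀ t, |α t - α' t| ≤ δ) (n : ℕ) :
    ENNReal.ofReal (1 - δ) ^ n * P (N ⁻¹' {n}) ≤
      P ({ω | ∀ i < n, U i ω ∉ Set.Ioc (min (α (b i ω)) (α' (b i ω)))
        (max (α (b i ω)) (α' (b i ω)))} ∩ N ⁻¹' {n}) := by
  set c₀ : ℝ≥0∞ := ENNReal.ofReal (1 - δ) with hc₀
  set UU : Ω → (ℕ → ℝ) := fun ω i => U i ω with hUU
  set VV : Ω → ℕ × (ℕ → ℝ) := fun ω => (N ω, fun i => b i ω) with hVV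
  have hUUm : Measurable UU := measurable_pi_lambda _ hUmeas
  have hVVm : Measurable VV := Measurable.prodMk hN (measurable_pi_lambda _ hb)
  -- the single-coordinate bound
  have hfac : ∀ (i : ℕ) (t : ℝ),
      c₀ ≤ P (U i ⁻¹' (Set.Ioc (min (α t) (α' t)) (max (α t) (α' t)))ᶜ) := by
    intro i t
    have h1 : P (U i ⁻¹' Set.Ioc (min (α t) (α' t)) (max (α t) (α' t)))
        ≤ ENNReal.ofReal δ := by
      rw [← Measure.map_apply (hUmeas i) measurableSet_Ioc, hUunif i,
          Measure.restrict_apply measurableSet_Ioc]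
      have hsub : Set.Ioc (min (α t) (α' t)) (max (α t) (α' t)) ∩ Set.Icc (0 : ℝ) 1
          = Set.Ioc (min (α t) (α' t)) (max (α t) (α' t)) := by
        apply Set.inter_eq_self_of_subset_left
        intro x hx
        exact ⟨le_trans (le_min (hα t).1 (hα' t).1) hx.1.le,
          le_trans hx.2 (max_le (hα t).2 (hα' t).2)⟩
      rw [hsub, Real.volume_Ioc]
      apply ENNReal.ofReal_le_ofReal
      rw [max_sub_min_eq_abs, abs_sub_comm]
      exact hdiff t
    rw [Set.preimage_compl,
      measure_compl ((hUmeas i) measurableSet_Ioc) (measure_ne_top P _), measure_univ]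
    calc c₀ = 1 - ENNReal.ofReal δ := by
          rw [hc₀, ENNReal.ofReal_sub _ hδ.1, ENNReal.ofReal_one]
      _ ≤ 1 - P (U i ⁻¹' Set.Ioc (min (α t) (α' t)) (max (α t) (α' t))) :=
          tsub_le_tsub_left h1 1
  -- independence of VV and UU
  have hIndep : IndepFun VV UU P := by
    have h1 : MeasurableSpace.comap UU MeasurableSpace.pi
        ≤ ⨆ i, MeasurableSpace.comap (U i) inferInstance := by
      rw [show (MeasurableSpace.pi : MeasurableSpace (ℕ → ℝ))
            = ⨆ i, MeasurableSpace.comap (fun u : ℕ → ℝ => u i) inferInstance from rfl,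
          MeasurableSpace.comap_iSup]
      refine iSup_le fun i => ?_
      rw [MeasurableSpace.comap_comp]
      exact le_iSup (fun j => MeasurableSpace.comap (U j) inferInstance) i
    have h2 : MeasurableSpace.comap VV inferInstance
        ≤ MeasurableSpace.comap N inferInstance
          ⊔ ⨆ i, MeasurableSpace.comap (b i) inferInstance := by
      rw [show (inferInstance : MeasurableSpace (ℕ × (ℕ → ℝ)))
            = MeasurableSpace.comap (Prod.fst : ℕ × (ℕ → ℝ) → ℕ) inferInstance
              ⊔ MeasurableSpace.comap (Prod.snd : ℕ × (ℕ → ℝ) → (ℕ → ℝ)) MeasurableSpace.pi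
            from rfl,
          MeasurableSpace.comap_sup]
      refine sup_le_sup ?_ ?_
      · rw [MeasurableSpace.comap_comp]
        exact le_of_eq rfl
      · rw [MeasurableSpace.comap_comp,
          show (MeasurableSpace.pi : MeasurableSpace (ℕ → ℝ))
            = ⨆ i, MeasurableSpace.comap (fun u : ℕ → ℝ => u i) inferInstance from rfl,
          MeasurableSpace.comap_iSup]
        refine iSup_le fun i => ?_
        rw [MeasurableSpace.comap_comp]
        exact le_iSup (fun j => MeasurableSpace.comap (b j) inferInstance) i
    exact indep_of_indep_of_le_right (indep_of_indep_of_le_left hUindepNb.symm h2) h1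
  have hmap : P.map (fun ω => (VV ω, UU ω)) = (P.map VV).prod (P.map UU) :=
    (indepFun_iff_map_prod_eq_prod_map_map hVVm.aemeasurable hUUm.aemeasurable).mp hIndep
  -- the joint event
  set C : Set ((ℕ × (ℕ → ℝ)) × (ℕ → ℝ)) :=
    {p | p.1.1 = n ∧ ∀ i < n, p.2 i ∉ Set.Ioc (min (α (p.1.2 i)) (α' (p.1.2 i)))
      (max (α (p.1.2 i)) (α' (p.1.2 i)))} with hC
  have h2 : ∀ i, MeasurableSet {p : (ℕ × (ℕ → ℝ)) × (ℕ → ℝ) |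
      p.2 i ∈ Set.Ioc (min (α (p.1.2 i)) (α' (p.1.2 i)))
        (max (α (p.1.2 i)) (α' (p.1.2 i)))} := by
    intro i
    have hg : Measurable fun p : (ℕ × (ℕ → ℝ)) × (ℕ → ℝ) => p.1.2 i :=
      (measurable_pi_apply i).comp (measurable_snd.comp measurable_fst)
    have hu : Measurable fun p : (ℕ × (ℕ → ℝ)) × (ℕ → ℝ) => p.2 i :=
      (measurable_pi_apply i).comp measurable_snd
    have : {p : (ℕ × (ℕ → ℝ)) × (ℕ → ℝ) |
        p.2 i ∈ Set.Ioc (min (α (p.1.2 i)) (α' (p.1.2 i)))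
          (max (α (p.1.2 i)) (α' (p.1.2 i)))}
        = {p : (ℕ × (ℕ → ℝ)) × (ℕ → ℝ) | min (α (p.1.2 i)) (α' (p.1.2 i)) < p.2 i}
          ∩ {p : (ℕ × (ℕ → ℝ)) × (ℕ → ℝ) | p.2 i ≤ max (α (p.1.2 i)) (α' (p.1.2 i))} := by
      ext p; simp [Set.mem_Ioc]
    rw [this]
    exact (measurableSet_lt ((hαm.comp hg).min (hα'm.comp hg)) hu).inter
      (measurableSet_le hu ((hαm.comp hg).max (hα'm.comp hg)))
  have h1 : MeasurableSet {p : (ℕ × (ℕ → ℝ)) × (ℕ → ℝ) | p.1.1 = n} := by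
    have := (measurable_fst.fst (MeasurableSet.singleton n) :
      MeasurableSet ((fun p : (ℕ × (ℕ → ℝ)) × (ℕ → ℝ) => p.1.1) ⁻¹' {n}))
    simpa [Set.preimage] using this
  have hCmeas : MeasurableSet C := by
    have hCe : C = {p : (ℕ × (ℕ → ℝ)) × (ℕ → ℝ) | p.1.1 = n}
        ∩ ⋂ i, ⋂ (_ : i < n), {p : (ℕ × (ℕ → ℝ)) × (ℕ → ℝ) |
          p.2 i ∈ Set.Ioc (min (α (p.1.2 i)) (α' (p.1.2 i)))
            (max (α (p.1.2 i)) (α' (p.1.2 i)))}ᶜ := by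
      ext p
      simp only [hC, Set.mem_setOf_eq, Set.mem_inter_iff, Set.mem_iInter, Set.mem_compl_iff]
    rw [hCe]
    exact h1.inter (MeasurableSet.iInter fun i => MeasurableSet.iInter fun _ => (h2 i).compl)
  -- rewrite the event as a preimage
  have hEeq : {ω | ∀ i < n, U i ω ∉ Set.Ioc (min (α (b i ω)) (α' (b i ω)))
      (max (α (b i ω)) (α' (b i ω)))} ∩ N ⁻¹' {n}
      = (fun ω => (VV ω, UU ω)) ⁻¹' C := by
    ext ω
    simp only [hC, hVV, hUU, Set.mem_inter_iff, Set.mem_setOf_eq, Set.mem_preimage,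
      Set.mem_singleton_iff]
    tauto
  rw [hEeq, ← Measure.map_apply (hVVm.prodMk hUUm) hCmeas, hmap,
    Measure.prod_apply hCmeas]
  -- pointwise lower bound for the sections
  have hsec : ∀ v : ℕ × (ℕ → ℝ),
      Set.indicator ((Prod.fst : ℕ × (ℕ → ℝ) → ℕ) ⁻¹' {n}) (fun _ => c₀ ^ n) v
        ≤ (P.map UU) (Prod.mk v ⁻¹' C) := by
    intro v
    by_cases hv : v.1 = n
    · rw [Set.indicator_of_mem (by simpa using hv)]
      have hpre : Prod.mk v ⁻¹' C
          = {u : ℕ → ℝ | ∀ i < n, u i ∉ Set.Ioc (min (α (v.2 i)) (α' (v.2 i)))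
              (max (α (v.2 i)) (α' (v.2 i)))} := by
        ext u
        simp [hC, hv]
      have hSmeas : MeasurableSet {u : ℕ → ℝ | ∀ i < n,
          u i ∉ Set.Ioc (min (α (v.2 i)) (α' (v.2 i))) (max (α (v.2 i)) (α' (v.2 i)))} := by
        have : {u : ℕ → ℝ | ∀ i < n,
            u i ∉ Set.Ioc (min (α (v.2 i)) (α' (v.2 i))) (max (α (v.2 i)) (α' (v.2 i)))}
            = ⋂ i, ⋂ (_ : i < n), (fun u : ℕ → ℝ => u i) ⁻¹'
              (Set.Ioc (min (α (v.2 i)) (α' (v.2 i))) (max (α (v.2 i)) (α' (v.2 i))))ᶜ := by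
          ext u; simp
        rw [this]
        exact MeasurableSet.iInter fun i => MeasurableSet.iInter fun _ =>
          (measurable_pi_apply i) measurableSet_Ioc.compl
      rw [hpre, Measure.map_apply hUUm hSmeas]
      have hiEq : UU ⁻¹' {u : ℕ → ℝ | ∀ i < n,
          u i ∉ Set.Ioc (min (α (v.2 i)) (α' (v.2 i))) (max (α (v.2 i)) (α' (v.2 i)))}
          = ⋂ i ∈ Finset.range n, U i ⁻¹'
            ((Set.Ioc (min (α (v.2 i)) (α' (v.2 i))) (max (α (v.2 i)) (α' (v.2 i))))ᶜ) := by
        ext ω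
        simp [hUU, Finset.mem_range]
      rw [hiEq, hUindep.measure_inter_preimage_eq_mul (Finset.range n)
        (fun i _ => measurableSet_Ioc.compl)]
      calc c₀ ^ n = ∏ _i ∈ Finset.range n, c₀ := by
            rw [Finset.prod_const, Finset.card_range]
        _ ≤ ∏ i ∈ Finset.range n, P (U i ⁻¹'
              ((Set.Ioc (min (α (v.2 i)) (α' (v.2 i))) (max (α (v.2 i)) (α' (v.2 i))))ᶜ)) :=
            Finset.prod_le_prod' fun i _ => hfac i (v.2 i)
    · rw [Set.indicator_of_notMem (by simpa using hv)]
      exact zero_le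
  calc c₀ ^ n * P (N ⁻¹' {n})
      = ∫⁻ v, Set.indicator ((Prod.fst : ℕ × (ℕ → ℝ) → ℕ) ⁻¹' {n})
          (fun _ => c₀ ^ n) v ∂(P.map VV) := by
        rw [lintegral_indicator (measurable_fst (MeasurableSet.singleton n)),
          setLIntegral_const, Measure.map_apply hVVm
            (measurable_fst (MeasurableSet.singleton n))]
        rfl
    _ ≤ ∫⁻ v, (P.map UU) (Prod.mk v ⁻¹' C) ∂(P.map VV) := lintegral_mono hsec

/-- Quantitative coupling bound: if `|α(t) − α'(t)| ≤ δ` for all `t`, then the probability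
of the complement of the agreement event is at most `1 − E[(1−δ)^N]`. -/
theorem prob_compl_agreeEvent_le {Ω : Type*} [MeasurableSpace Ω]
    (P : Measure Ω) [IsProbabilityMeasure P]
    (N : Ω → ℕ) (hN : Measurable N)
    (b : ℕ → Ω → ℝ) (hb : ∀ i, Measurable (b i))
    (U : ℕ → Ω → ℝ) (hUmeas : ∀ i, Measurable (U i))
    (hUindep : iIndepFun U P)
    (hUunif : ∀ i, P.map (U i) = (volume : Measure ℝ).restrict (Set.Icc 0 1))
    (hUindepNb : Indep (⨆ i, MeasurableSpace.comap (U i) inferInstance)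
      (MeasurableSpace.comap N inferInstance ⊔ ⨆ i, MeasurableSpace.comap (b i) inferInstance)
      P)
    (α α' : ℝ → ℝ) (hαm : Measurable α) (hα'm : Measurable α')
    (hα : ∀ t, α t ∈ Set.Icc (0 : ℝ) 1) (hα' : ∀ t, α' t ∈ Set.Icc (0 : ℝ) 1)
    (δ : ℝ) (hδ : δ ∈ Set.Icc (0 : ℝ) 1) (hdiff : ∀ t, |α t - α' t| ≤ δ) :
    (P (agreeEvent N b U α α')ᶜ).toReal ≤ 1 - ∫ ω, (1 - δ) ^ N ω ∂P := by
  set c₀ : ℝ≥0∞ := ENNReal.ofReal (1 - δ) with hc₀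
  have hδ1 : (0 : ℝ) ≤ 1 - δ := by linarith [hδ.2]
  -- the fibered events
  set E : ℕ → Set Ω := fun n =>
    {ω | ∀ i < n, U i ω ∉ Set.Ioc (min (α (b i ω)) (α' (b i ω)))
      (max (α (b i ω)) (α' (b i ω)))} ∩ N ⁻¹' {n} with hE
  have hD : ∀ i, MeasurableSet {ω | U i ω ∈ Set.Ioc (min (α (b i ω)) (α' (b i ω)))
      (max (α (b i ω)) (α' (b i ω)))} := by
    intro i
    have : {ω | U i ω ∈ Set.Ioc (min (α (b i ω)) (α' (b i ω)))
        (max (α (b i ω)) (α' (b i ω)))}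
        = {ω | min (α (b i ω)) (α' (b i ω)) < U i ω}
          ∩ {ω | U i ω ≤ max (α (b i ω)) (α' (b i ω))} := by
      ext ω; simp [Set.mem_Ioc]
    rw [this]
    exact (measurableSet_lt ((hαm.comp (hb i)).min (hα'm.comp (hb i))) (hUmeas i)).inter
      (measurableSet_le (hUmeas i) ((hαm.comp (hb i)).max (hα'm.comp (hb i))))
  have hEmeas : ∀ n, MeasurableSet (E n) := by
    intro n
    refine MeasurableSet.inter ?_ (hN (MeasurableSet.singleton n))
    have : {ω | ∀ i < n, U i ω ∉ Set.Ioc (min (α (b i ω)) (α' (b i ω)))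
        (max (α (b i ω)) (α' (b i ω)))}
        = ⋂ i, ⋂ (_ : i < n), {ω | U i ω ∈ Set.Ioc (min (α (b i ω)) (α' (b i ω)))
          (max (α (b i ω)) (α' (b i ω)))}ᶜ := by
      ext ω; simp
    rw [this]
    exact MeasurableSet.iInter fun i => MeasurableSet.iInter fun _ => (hD i).compl
  have hBE : agreeEvent N b U α α' = ⋃ n, E n := by
    ext ω
    simp only [agreeEvent, Set.mem_setOf_eq, Set.mem_iUnion, hE, Set.mem_inter_iff,
      Set.mem_preimage, Set.mem_singleton_iff]
    constructor
    · intro h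
      exact ⟨N ω, h, rfl⟩
    · rintro ⟨n, h, rfl⟩
      exact h
  have hdisj : Pairwise (Function.onFun Disjoint E) := by
    intro m k hmk
    refine Set.disjoint_left.mpr fun ω hm hk => hmk ?_
    have h1 : N ω = m := hm.2
    have h2 : N ω = k := hk.2
    rw [← h1, h2]
  have hBmeas : MeasurableSet (agreeEvent N b U α α') := by
    rw [hBE]; exact MeasurableSet.iUnion hEmeas
  -- P(B) ≥ ∑ c₀^n P(N = n)
  have hPB : ∑' n, c₀ ^ n * P (N ⁻¹' {n}) ≤ P (agreeEvent N b U α α') := by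
    rw [hBE, measure_iUnion hdisj hEmeas]
    exact ENNReal.tsum_le_tsum fun n =>
      aux_key P N hN b hb U hUmeas hUindep hUunif hUindepNb α α' hαm hα'm hα hα' δ hδ hdiff n
  -- the lintegral equals the sum
  have hlin : ∫⁻ ω, c₀ ^ N ω ∂P = ∑' n, c₀ ^ n * P (N ⁻¹' {n}) := by
    rw [← lintegral_map (f := fun m : ℕ => c₀ ^ m) measurable_from_top hN,
      lintegral_countable']
    refine tsum_congr fun n => ?_
    rw [Measure.map_apply hN (MeasurableSet.singleton n)]
  -- identify the Bochner integral with the lintegral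
  have hint : ∫ ω, (1 - δ) ^ N ω ∂P = (∫⁻ ω, c₀ ^ N ω ∂P).toReal := by
    rw [integral_eq_lintegral_of_nonneg_ae
        (Filter.Eventually.of_forall fun ω => pow_nonneg hδ1 (N ω))
        ((measurable_from_top.comp hN :
          Measurable fun ω => (1 - δ) ^ N ω).aestronglyMeasurable)]
    congr 1
    refine lintegral_congr fun ω => ?_
    rw [hc₀, ← ENNReal.ofReal_pow hδ1]
  have hfin : P (agreeEvent N b U α α') ≠ ⊤ := measure_ne_top P _
  have hle : ∫ ω, (1 - δ) ^ N ω ∂P ≤ (P (agreeEvent N b U α α')).toReal := by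
    rw [hint]
    exact ENNReal.toReal_mono hfin (hlin ▸ hPB)
  have hcompl : (P (agreeEvent N b U α α')ᶜ).toReal
      = 1 - (P (agreeEvent N b U α α')).toReal := by
    rw [prob_compl_eq_one_sub hBmeas,
      ENNReal.toReal_sub_of_le prob_le_one ENNReal.one_ne_top, ENNReal.toReal_one]
  rw [hcompl]
  linarith
end

section
/- In the coupling setting, let X̂ : Ω → ℝ be a nonnegative integrable random variable that is measurable with respect to the σ-algebra generated by N and all the b_i. Then for every ε > 0 there exists η > 0 with the following property: for all measurable α, α' : ℝ → [0,1] with sup_{t∈ℝ} |α(t) − α'(t)| ≤ η, and all measurable X, X' : Ω → ℝ satisfying 0 ≤ X(ω) ≤ X̂(ω) and 0 ≤ X'(ω) ≤ X̂(ω) for all ω, and X(ω) = X'(ω) for every ω in the agreement event B(α,α'), one has |E[X] − E[X']| ≤ ε. (This is the abstract content of the continuity-of-means result, Theorem 2(a) of the paper.) -/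
open MeasureTheory ProbabilityTheory
open scoped ENNReal

lemma lintegral_comp_pair_of_indep {Ω : Type*} [MeasurableSpace Ω] (P : Measure Ω)
    [IsProbabilityMeasure P] {u : Ω → ℝ} {V : Ω → ℝ × ℝ} (hu : Measurable u)
    (hV : Measurable V) (hind : IndepFun u V P) (F : ℝ × (ℝ × ℝ) → ℝ≥0∞)
    (hF : Measurable F) :
    ∫⁻ ω, F (u ω, V ω) ∂P = ∫⁻ v, ∫⁻ x, F (x, v) ∂(P.map u) ∂(P.map V) := by
  haveI : IsProbabilityMeasure (P.map u) := Measure.isProbabilityMeasure_map hu.aemeasurable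
  have h := (indepFun_iff_map_prod_eq_prod_map_map hu.aemeasurable hV.aemeasurable).1 hind
  rw [← lintegral_map hF (hu.prodMk hV), h, lintegral_prod_symm _ hF.aemeasurable]

lemma key_bound {Ω : Type*} [MeasurableSpace Ω] (P : Measure Ω) [IsProbabilityMeasure P]
    {u W Y : Ω → ℝ} (hu : Measurable u) (hW : Measurable W) (hY : Measurable Y)
    (hind : IndepFun u (fun ω => (W ω, Y ω)) P)
    (hu_unif : P.map u = (volume : Measure ℝ).restrict (Set.Icc 0 1))
    {α α' : ℝ → ℝ} (hα : Measurable α) (hα' : Measurable α')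
    {η : ℝ} (hηd : ∀ t, |α t - α' t| ≤ η) :
    ∫⁻ ω in {ω | u ω ∈ Set.Ioc (min (α (W ω)) (α' (W ω))) (max (α (W ω)) (α' (W ω)))},
      ENNReal.ofReal (Y ω) ∂P ≤ ENNReal.ofReal η * ∫⁻ ω, ENNReal.ofReal (Y ω) ∂P := by
  set F : ℝ × (ℝ × ℝ) → ℝ≥0∞ := fun p =>
    Set.indicator (Set.Ioc (min (α p.2.1) (α' p.2.1)) (max (α p.2.1) (α' p.2.1)))
      (fun _ => ENNReal.ofReal p.2.2) p.1 with hFdef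
  have hmn : Measurable fun p : ℝ × (ℝ × ℝ) => min (α p.2.1) (α' p.2.1) :=
    ((hα.comp (measurable_fst.comp measurable_snd)).min
      (hα'.comp (measurable_fst.comp measurable_snd)))
  have hmx : Measurable fun p : ℝ × (ℝ × ℝ) => max (α p.2.1) (α' p.2.1) :=
    ((hα.comp (measurable_fst.comp measurable_snd)).max
      (hα'.comp (measurable_fst.comp measurable_snd)))
  have hsetF : MeasurableSet {p : ℝ × (ℝ × ℝ) |
      p.1 ∈ Set.Ioc (min (α p.2.1) (α' p.2.1)) (max (α p.2.1) (α' p.2.1))} := by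
    have : {p : ℝ × (ℝ × ℝ) |
        p.1 ∈ Set.Ioc (min (α p.2.1) (α' p.2.1)) (max (α p.2.1) (α' p.2.1))} =
        {p | min (α p.2.1) (α' p.2.1) < p.1} ∩ {p | p.1 ≤ max (α p.2.1) (α' p.2.1)} := rfl
    rw [this]
    exact (measurableSet_lt hmn measurable_fst).inter (measurableSet_le measurable_fst hmx)
  have hF : Measurable F := by
    have : F = fun p => Set.piecewise {p : ℝ × (ℝ × ℝ) |
        p.1 ∈ Set.Ioc (min (α p.2.1) (α' p.2.1)) (max (α p.2.1) (α' p.2.1))}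
        (fun p => ENNReal.ofReal p.2.2) (fun _ => 0) p := by
      funext p
      simp [hFdef, Set.indicator_apply, Set.piecewise, Set.mem_setOf_eq]
    rw [this]
    exact Measurable.piecewise hsetF
      (ENNReal.measurable_ofReal.comp (measurable_snd.comp measurable_snd)) measurable_const
  have hS : MeasurableSet {ω | u ω ∈ Set.Ioc (min (α (W ω)) (α' (W ω)))
      (max (α (W ω)) (α' (W ω)))} := by
    have : {ω | u ω ∈ Set.Ioc (min (α (W ω)) (α' (W ω))) (max (α (W ω)) (α' (W ω)))} =
        (fun ω => ((u ω), (W ω, Y ω))) ⁻¹' {p : ℝ × (ℝ × ℝ) |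
        p.1 ∈ Set.Ioc (min (α p.2.1) (α' p.2.1)) (max (α p.2.1) (α' p.2.1))} := rfl
    rw [this]
    exact hsetF.preimage (hu.prodMk (hW.prodMk hY))
  have hLHS : ∫⁻ ω in {ω | u ω ∈ Set.Ioc (min (α (W ω)) (α' (W ω)))
      (max (α (W ω)) (α' (W ω)))}, ENNReal.ofReal (Y ω) ∂P
      = ∫⁻ ω, F (u ω, (W ω, Y ω)) ∂P := by
    rw [← lintegral_indicator hS]
    congr 1
  rw [hLHS, lintegral_comp_pair_of_indep P hu (hW.prodMk hY) hind F hF]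
  have hmap : P.map (fun ω => (W ω, Y ω)) = P.map (fun ω => (W ω, Y ω)) := rfl
  calc ∫⁻ v, ∫⁻ x, F (x, v) ∂(P.map u) ∂(P.map fun ω => (W ω, Y ω))
      ≤ ∫⁻ v, ENNReal.ofReal η * ENNReal.ofReal v.2 ∂(P.map fun ω => (W ω, Y ω)) := by
        apply lintegral_mono
        intro v
        beta_reduce
        have h1 : ∫⁻ x, F (x, v) ∂(P.map u)
            = ENNReal.ofReal v.2 * (P.map u) (Set.Ioc (min (α v.1) (α' v.1))
              (max (α v.1) (α' v.1))) := by
          simp only [hFdef]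
          exact lintegral_indicator_const measurableSet_Ioc _
        rw [h1, mul_comm]
        gcongr
        calc (P.map u) (Set.Ioc (min (α v.1) (α' v.1)) (max (α v.1) (α' v.1)))
            ≤ (volume : Measure ℝ) (Set.Ioc (min (α v.1) (α' v.1)) (max (α v.1) (α' v.1))) := by
              rw [hu_unif]
              exact Measure.le_iff'.1 Measure.restrict_le_self _
          _ = ENNReal.ofReal (max (α v.1) (α' v.1) - min (α v.1) (α' v.1)) :=
              Real.volume_Ioc
          _ ≤ ENNReal.ofReal η := by
              apply ENNReal.ofReal_le_ofReal
              rw [max_sub_min_eq_abs, abs_sub_comm]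
              exact hηd _
    _ = ENNReal.ofReal η * ∫⁻ ω, ENNReal.ofReal (Y ω) ∂P := by
        rw [lintegral_const_mul _ (measurable_snd.ennreal_ofReal)]
        congr 1
        rw [lintegral_map (measurable_snd.ennreal_ofReal) (hW.prodMk hY)]

/-- Continuity of means (abstract content of Theorem 2(a) of the paper): if `X̂` is a
nonnegative integrable random variable measurable with respect to the σ-algebra generated
by `N` and the `bᵢ`, then for every `ε > 0` there is `η > 0` such that any two random
variables dominated by `X̂` which agree on the agreement event `B(α,α')`, for vaccination
functions `α, α'` that are uniformly within `η` of each other, have means within `ε`. -/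
theorem abs_integral_sub_le_of_agree {Ω : Type*} [MeasurableSpace Ω]
    (P : Measure Ω) [IsProbabilityMeasure P]
    (N : Ω → ℕ) (hN : Measurable N)
    (b : ℕ → Ω → ℝ) (hb : ∀ i, Measurable (b i))
    (U : ℕ → Ω → ℝ) (hUmeas : ∀ i, Measurable (U i))
    (hUindep : iIndepFun U P)
    (hUunif : ∀ i, P.map (U i) = (volume : Measure ℝ).restrict (Set.Icc 0 1))
    (hUindepNb : Indep (⨆ i, MeasurableSpace.comap (U i) inferInstance)
      (MeasurableSpace.comap N inferInstance ⊔ ⨆ i, MeasurableSpace.comap (b i) inferInstance)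
      P)
    (Xhat : Ω → ℝ)
    (hXhatmeas : Measurable[MeasurableSpace.comap N inferInstance ⊔
      ⨆ i, MeasurableSpace.comap (b i) inferInstance] Xhat)
    (hXhatpos : ∀ ω, 0 ≤ Xhat ω) (hXhatint : Integrable Xhat P) :
    ∀ ε > (0 : ℝ), ∃ η > (0 : ℝ),
      ∀ (α α' : ℝ → ℝ), Measurable α → Measurable α' →
        (∀ t, α t ∈ Set.Icc (0 : ℝ) 1) → (∀ t, α' t ∈ Set.Icc (0 : ℝ) 1) →
        (∀ t, |α t - α' t| ≤ η) →
        ∀ (X X' : Ω → ℝ), Measurable X → Measurable X' →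
          (∀ ω, 0 ≤ X ω ∧ X ω ≤ Xhat ω) → (∀ ω, 0 ≤ X' ω ∧ X' ω ≤ Xhat ω) →
          (∀ ω ∈ agreeEvent N b U α α', X ω = X' ω) →
          |∫ ω, X ω ∂P - ∫ ω, X' ω ∂P| ≤ ε := by
  intro ε hε
  have hG_le : (MeasurableSpace.comap N inferInstance ⊔
      ⨆ i, MeasurableSpace.comap (b i) inferInstance) ≤ ‹MeasurableSpace Ω› :=
    sup_le hN.comap_le (iSup_le fun i => (hb i).comap_le)
  have hXm : Measurable Xhat := hXhatmeas.mono hG_le le_rfl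
  set μ' := P.withDensity (fun ω => ENNReal.ofReal (Xhat ω)) with hμ'def
  have hT : ∫⁻ ω, ENNReal.ofReal (Xhat ω) ∂P < ∞ := hXhatint.lintegral_lt_top
  haveI : IsFiniteMeasure μ' := isFiniteMeasure_withDensity hT.ne
  set C := (∫⁻ ω, ENNReal.ofReal (Xhat ω) ∂P).toReal with hCdef
  have hC0 : 0 ≤ C := ENNReal.toReal_nonneg
  -- choose M with small tail
  have htail : Filter.Tendsto (fun M : ℕ => μ' {ω | M < N ω}) Filter.atTop (nhds 0) := by
    have hmeas : ∀ M : ℕ, MeasurableSet {ω | M < N ω} := fun M =>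
      hN measurableSet_Ioi
    have hiInter : (⋂ M : ℕ, {ω | M < N ω}) = (∅ : Set Ω) := by
      ext ω
      simp only [Set.mem_iInter, Set.mem_setOf_eq, Set.mem_empty_iff_false, iff_false, not_forall,
        not_lt]
      exact ⟨N ω, le_refl _⟩
    have := tendsto_measure_iInter_atTop (μ := μ') (s := fun M : ℕ => {ω | M < N ω})
      (fun M => (hmeas M).nullMeasurableSet)
      (fun i j hij ω hω => lt_of_le_of_lt hij hω)
      ⟨0, measure_ne_top _ _⟩
    rw [hiInter] at this
    simpa [Function.comp_def] using this
  obtain ⟨M, hM⟩ : ∃ M : ℕ, μ' {ω | M < N ω} ≤ ENNReal.ofReal (ε / 2) := by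
    have h2 : (0 : ℝ≥0∞) < ENNReal.ofReal (ε / 2) := ENNReal.ofReal_pos.2 (by linarith)
    exact ((htail.eventually (gt_mem_nhds h2)).exists).imp fun M h => h.le
  -- choose η
  refine ⟨(ε / 2) / ((M : ℝ) * C + 1), by positivity, ?_⟩
  set η := (ε / 2) / ((M : ℝ) * C + 1) with hηdef
  have hη0 : 0 < η := by positivity
  intro α α' hα hα' hα01 hα'01 hαd X X' hXmeas hX'meas hXb hX'b hagree
  -- the "bad" sets
  set A : ℕ → Set Ω := fun i =>
    {ω | U i ω ∈ Set.Ioc (min (α (b i ω)) (α' (b i ω))) (max (α (b i ω)) (α' (b i ω)))}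
    with hAdef
  have hAmeas : ∀ i, MeasurableSet (A i) := by
    intro i
    have h1 : A i = {ω | min (α (b i ω)) (α' (b i ω)) < U i ω} ∩
        {ω | U i ω ≤ max (α (b i ω)) (α' (b i ω))} := rfl
    rw [h1]
    exact (measurableSet_lt ((hα.comp (hb i)).min (hα'.comp (hb i))) (hUmeas i)).inter
      (measurableSet_le (hUmeas i) ((hα.comp (hb i)).max (hα'.comp (hb i))))
  have hB : MeasurableSet (agreeEvent N b U α α') := by
    have h1 : agreeEvent N b U α α' = ⋂ i, ({ω | i < N ω} ∩ A i)ᶜ := by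
      ext ω
      simp only [agreeEvent, Set.mem_setOf_eq, Set.mem_iInter, Set.mem_compl_iff,
        Set.mem_inter_iff, hAdef, not_and]
    rw [h1]
    exact MeasurableSet.iInter fun i => ((hN measurableSet_Ioi).inter (hAmeas i)).compl
  -- inclusion of the complement
  have hincl : (agreeEvent N b U α α')ᶜ ⊆ {ω | M < N ω} ∪ ⋃ i ∈ Finset.range M, A i := by
    intro ω hω
    simp only [agreeEvent, Set.mem_compl_iff, Set.mem_setOf_eq, not_forall] at hω
    obtain ⟨i, hiN, hmem⟩ := hω
    by_cases hMN : M < N ω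
    · exact Or.inl hMN
    · refine Or.inr ?_
      have hiM : i < M := lt_of_lt_of_le hiN (not_lt.1 hMN)
      exact Set.mem_biUnion (Finset.mem_range.2 hiM) (not_not.1 hmem)
  -- per-index bound via independence
  have hAbound : ∀ i, μ' (A i) ≤ ENNReal.ofReal η * ∫⁻ ω, ENNReal.ofReal (Xhat ω) ∂P := by
    intro i
    have hbG : Measurable[MeasurableSpace.comap N inferInstance ⊔
        ⨆ j, MeasurableSpace.comap (b j) inferInstance] (b i) :=
      Measurable.of_comap_le (le_trans (le_iSup (fun j => MeasurableSpace.comap (b j)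
        inferInstance) i) le_sup_right)
    have hVG : Measurable[MeasurableSpace.comap N inferInstance ⊔
        ⨆ j, MeasurableSpace.comap (b j) inferInstance] (fun ω => (b i ω, Xhat ω)) :=
      hbG.prodMk hXhatmeas
    have hind : IndepFun (U i) (fun ω => (b i ω, Xhat ω)) P :=
      indep_of_indep_of_le_right (indep_of_indep_of_le_left hUindepNb
        (le_iSup (fun j => MeasurableSpace.comap (U j) inferInstance) i)) hVG.comap_le
    have hkey := key_bound P (hUmeas i) (hb i) hXm hind (hUunif i) hα hα' hαd
    calc μ' (A i) = ∫⁻ ω in A i, ENNReal.ofReal (Xhat ω) ∂P :=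
          withDensity_apply _ (hAmeas i)
      _ ≤ ENNReal.ofReal η * ∫⁻ ω, ENNReal.ofReal (Xhat ω) ∂P := hkey
  -- total bound on the bad event
  have hBc : μ' (agreeEvent N b U α α')ᶜ ≤ ENNReal.ofReal ε := by
    have h1 : μ' (agreeEvent N b U α α')ᶜ ≤
        μ' {ω | M < N ω} + ∑ i ∈ Finset.range M, μ' (A i) :=
      le_trans (measure_mono hincl)
        (le_trans (measure_union_le _ _) (by gcongr; exact measure_biUnion_finset_le _ _))
    have h2 : ∑ i ∈ Finset.range M, μ' (A i) ≤ ENNReal.ofReal (ε / 2) := by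
      calc ∑ i ∈ Finset.range M, μ' (A i)
          ≤ ∑ _i ∈ Finset.range M, ENNReal.ofReal η * ∫⁻ ω, ENNReal.ofReal (Xhat ω) ∂P :=
            Finset.sum_le_sum fun i _ => hAbound i
        _ = (M : ℝ≥0∞) * (ENNReal.ofReal η * ∫⁻ ω, ENNReal.ofReal (Xhat ω) ∂P) := by
            rw [Finset.sum_const, Finset.card_range, nsmul_eq_mul]
        _ ≤ (M : ℝ≥0∞) * (ENNReal.ofReal η * ENNReal.ofReal C) := by
            gcongr
            rw [hCdef, ENNReal.ofReal_toReal hT.ne]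
        _ = ENNReal.ofReal ((M : ℝ) * (η * C)) := by
            rw [← ENNReal.ofReal_mul hη0.le, ← ENNReal.ofReal_natCast M,
              ← ENNReal.ofReal_mul (by positivity)]
        _ ≤ ENNReal.ofReal (ε / 2) := by
            apply ENNReal.ofReal_le_ofReal
            have hd : (0:ℝ) < (M : ℝ) * C + 1 := by positivity
            have h3 : η * ((M : ℝ) * C + 1) = ε / 2 := div_mul_cancel₀ _ hd.ne'
            nlinarith [hη0.le, hC0, Nat.cast_nonneg (α := ℝ) M,
              mul_nonneg (Nat.cast_nonneg (α := ℝ) M) hC0]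
    calc μ' (agreeEvent N b U α α')ᶜ
        ≤ μ' {ω | M < N ω} + ∑ i ∈ Finset.range M, μ' (A i) := h1
      _ ≤ ENNReal.ofReal (ε / 2) + ENNReal.ofReal (ε / 2) := add_le_add hM h2
      _ = ENNReal.ofReal ε := by
          rw [← ENNReal.ofReal_add (by linarith) (by linarith)]
          norm_num
  -- pass to real integrals
  have hXint : Integrable X P := hXhatint.mono' hXmeas.aestronglyMeasurable
    (Filter.Eventually.of_forall fun ω => by
      rw [Real.norm_eq_abs, abs_of_nonneg (hXb ω).1]; exact (hXb ω).2)
  have hX'int : Integrable X' P := hXhatint.mono' hX'meas.aestronglyMeasurable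
    (Filter.Eventually.of_forall fun ω => by
      rw [Real.norm_eq_abs, abs_of_nonneg (hX'b ω).1]; exact (hX'b ω).2)
  have hsub : ∫ ω, X ω ∂P - ∫ ω, X' ω ∂P = ∫ ω in (agreeEvent N b U α α')ᶜ, (X ω - X' ω) ∂P := by
    rw [← integral_sub hXint hX'int]
    exact (setIntegral_eq_integral_of_forall_compl_eq_zero fun ω hω =>
      sub_eq_zero.2 (hagree ω (not_not.1 hω))).symm
  rw [hsub]
  have habs : |∫ ω in (agreeEvent N b U α α')ᶜ, (X ω - X' ω) ∂P| ≤
      ∫ ω in (agreeEvent N b U α α')ᶜ, |X ω - X' ω| ∂P := by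
    simpa [Real.norm_eq_abs] using
      norm_integral_le_integral_norm (μ := P.restrict (agreeEvent N b U α α')ᶜ)
        (fun ω => X ω - X' ω)
  refine le_trans habs ?_
  calc ∫ ω in (agreeEvent N b U α α')ᶜ, |X ω - X' ω| ∂P
      ≤ ∫ ω in (agreeEvent N b U α α')ᶜ, Xhat ω ∂P := by
        apply integral_mono ((hXint.sub hX'int).abs.restrict) (hXhatint.restrict)
        intro ω
        have h1 := hXb ω
        have h2 := hX'b ω
        show |X ω - X' ω| ≤ Xhat ω
        rw [abs_sub_le_iff]
        constructor <;> [linarith [h1.2, h2.1]; linarith [h2.2, h1.1]]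
    _ = (μ' (agreeEvent N b U α α')ᶜ).toReal := by
        rw [integral_eq_lintegral_of_nonneg_ae (Filter.Eventually.of_forall hXhatpos)
          hXm.aestronglyMeasurable, hμ'def, withDensity_apply _ hB.compl]
    _ ≤ ε := ENNReal.toReal_le_of_le_ofReal (le_of_lt hε) hBc
end

section
/- In the coupling setting, let α, α' : ℝ → [0,1] be measurable, let δ ∈ [0,1] satisfy |α(t) − α'(t)| ≤ δ for all t ∈ ℝ, and let X, X' : Ω → ℝ be measurable random variables with X(ω) = X'(ω) for every ω in the agreement event B(α,α'). Then sup_{x ∈ ℝ} |P(X ≤ x) − P(X' ≤ x)| ≤ 1 − E[(1−δ)^N]. (This is the quantitative form of the uniform continuity of distribution functions, Theorem 3(b) of the paper; note the bound is independent of X, X' and x.) -/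
open MeasureTheory ProbabilityTheory
open scoped ENNReal

/-- Quantitative uniform continuity of distribution functions (Theorem 3(b) of the paper):
if `|α(t) − α'(t)| ≤ δ` for all `t` and `X = X'` on the agreement event `B(α,α')`, then
`sup_x |P(X ≤ x) − P(X' ≤ x)| ≤ 1 − E[(1−δ)^N]`; the bound is independent of `X`, `X'`
and `x`. -/
theorem dist_cdf_le_of_agree {Ω : Type*} [MeasurableSpace Ω]
    (P : Measure Ω) [IsProbabilityMeasure P]
    (N : Ω → ℕ) (hN : Measurable N)
    (b : ℕ → Ω → ℝ) (hb : ∀ i, Measurable (b i))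
    (U : ℕ → Ω → ℝ) (hUmeas : ∀ i, Measurable (U i))
    (hUindep : iIndepFun U P)
    (hUunif : ∀ i, P.map (U i) = (volume : Measure ℝ).restrict (Set.Icc 0 1))
    (hUindepNb : Indep (⨆ i, MeasurableSpace.comap (U i) inferInstance)
      (MeasurableSpace.comap N inferInstance ⊔ ⨆ i, MeasurableSpace.comap (b i) inferInstance)
      P)
    (α α' : ℝ → ℝ) (hαm : Measurable α) (hα'm : Measurable α')
    (hα : ∀ t, α t ∈ Set.Icc (0 : ℝ) 1) (hα' : ∀ t, α' t ∈ Set.Icc (0 : ℝ) 1)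
    (δ : ℝ) (hδ : δ ∈ Set.Icc (0 : ℝ) 1) (hdiff : ∀ t, |α t - α' t| ≤ δ)
    (X X' : Ω → ℝ) (hX : Measurable X) (hX' : Measurable X')
    (hagree : ∀ ω ∈ agreeEvent N b U α α', X ω = X' ω) :
    ∀ x : ℝ, |(P {ω | X ω ≤ x}).toReal - (P {ω | X' ω ≤ x}).toReal| ≤
      1 - ∫ ω, (1 - δ) ^ N ω ∂P := by
  intro x
  set A := agreeEvent N b U α α' with hA_def
  -- the pair map
  set T : Ω → ℕ × (ℕ → ℝ) := fun ω => (N ω, fun i => b i ω) with hT_def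
  set V : Ω → (ℕ → ℝ) := fun ω => fun i => U i ω with hV_def
  have hT : Measurable T := hN.prodMk (measurable_pi_lambda _ hb)
  have hV : Measurable V := measurable_pi_lambda _ hUmeas
  -- the set S
  set S : Set ((ℕ × (ℕ → ℝ)) × (ℕ → ℝ)) :=
    {p | ∀ i < p.1.1, p.2 i ∉
      Set.Ioc (min (α (p.1.2 i)) (α' (p.1.2 i))) (max (α (p.1.2 i)) (α' (p.1.2 i)))} with hS_def
  have hS : MeasurableSet S := by
    have : S = ⋂ i : ℕ, ({p : (ℕ × (ℕ → ℝ)) × (ℕ → ℝ) | i < p.1.1}ᶜ ∪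
        ({p : (ℕ × (ℕ → ℝ)) × (ℕ → ℝ) |
          min (α (p.1.2 i)) (α' (p.1.2 i)) < p.2 i} ∩
         {p : (ℕ × (ℕ → ℝ)) × (ℕ → ℝ) | p.2 i ≤ max (α (p.1.2 i)) (α' (p.1.2 i))})ᶜ) := by
      ext p
      simp only [hS_def, Set.mem_setOf_eq, Set.mem_iInter, Set.mem_union, Set.mem_compl_iff,
        Set.mem_inter_iff, Set.mem_Ioc]
      constructor
      · intro h i; by_cases hi : i < p.1.1
        · exact Or.inr (by simpa using h i hi)
        · exact Or.inl hi
      · intro h i hi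
        rcases h i with h' | h'
        · exact absurd hi h'
        · simpa using h'
    rw [this]
    refine MeasurableSet.iInter fun i => MeasurableSet.union ?_ (MeasurableSet.compl ?_)
    · exact ((measurable_fst.comp measurable_fst) (measurableSet_Ioi (a := i))).compl
    · have hβ : Measurable fun p : (ℕ × (ℕ → ℝ)) × (ℕ → ℝ) => p.1.2 i :=
        (measurable_pi_apply i).comp (measurable_snd.comp measurable_fst)
      have hu : Measurable fun p : (ℕ × (ℕ → ℝ)) × (ℕ → ℝ) => p.2 i :=
        (measurable_pi_apply i).comp measurable_snd
      exact (measurableSet_lt (((hαm.comp hβ).min (hα'm.comp hβ))) hu).inter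
        (measurableSet_le hu (((hαm.comp hβ).max (hα'm.comp hβ))))
  have hA_eq : A = (fun ω => (T ω, V ω)) ⁻¹' S := rfl
  have hAmeas : MeasurableSet A := hA_eq ▸ (hT.prodMk hV) hS
  -- independence of T and V
  have hIndep : IndepFun T V P := by
    have hpiV : MeasurableSpace.comap V (MeasurableSpace.pi) ≤
        ⨆ i, MeasurableSpace.comap (U i) inferInstance := by
      rw [show (MeasurableSpace.pi : MeasurableSpace (ℕ → ℝ)) =
        ⨆ i, MeasurableSpace.comap (fun f : ℕ → ℝ => f i) inferInstance from rfl,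
        MeasurableSpace.comap_iSup]
      exact iSup_le fun i => le_iSup_of_le i (le_of_eq (by rw [MeasurableSpace.comap_comp]; rfl))
    refine indep_of_indep_of_le_left (indep_of_indep_of_le_right hUindepNb.symm hpiV) ?_
    rw [show (Prod.instMeasurableSpace : MeasurableSpace (ℕ × (ℕ → ℝ))) =
      MeasurableSpace.comap Prod.fst inferInstance ⊔
        MeasurableSpace.comap Prod.snd inferInstance from rfl,
      MeasurableSpace.comap_sup, MeasurableSpace.comap_comp, MeasurableSpace.comap_comp]
    refine sup_le_sup (le_of_eq rfl) ?_
    have : MeasurableSpace.comap (Prod.snd ∘ T) MeasurableSpace.pi ≤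
        ⨆ i, MeasurableSpace.comap (b i) inferInstance := by
      rw [show (MeasurableSpace.pi : MeasurableSpace (ℕ → ℝ)) =
        ⨆ i, MeasurableSpace.comap (fun f : ℕ → ℝ => f i) inferInstance from rfl,
        MeasurableSpace.comap_iSup]
      exact iSup_le fun i => le_iSup_of_le i (le_of_eq (by rw [MeasurableSpace.comap_comp]; rfl))
    exact this
  have hmap : P.map (fun ω => (T ω, V ω)) = (P.map T).prod (P.map V) :=
    (indepFun_iff_map_prod_eq_prod_map_map hT.aemeasurable hV.aemeasurable).mp hIndep
  -- compute P A as an integral over the law of T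
  have hPA : P A = ∫⁻ y, (P.map V) (Prod.mk y ⁻¹' S) ∂(P.map T) := by
    rw [hA_eq, ← Measure.map_apply (hT.prodMk hV) hS, hmap, Measure.prod_apply hS]
  -- lower bound of the section measure
  have hδ0 : (0 : ℝ) ≤ 1 - δ := by linarith [hδ.2]
  have hsection : ∀ y : ℕ × (ℕ → ℝ),
      ENNReal.ofReal ((1 - δ) ^ y.1) ≤ (P.map V) (Prod.mk y ⁻¹' S) := by
    rintro ⟨n, β⟩
    set c : ℕ → ℝ := fun i => min (α (β i)) (α' (β i)) with hc
    set d : ℕ → ℝ := fun i => max (α (β i)) (α' (β i)) with hd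
    have hsec : Prod.mk (n, β) ⁻¹' S = {u : ℕ → ℝ | ∀ i < n, u i ∉ Set.Ioc (c i) (d i)} := rfl
    have hsecm : MeasurableSet (Prod.mk (n, β) ⁻¹' S) := hS.preimage measurable_prodMk_left
    rw [Measure.map_apply hV hsecm, hsec]
    have hVpre : V ⁻¹' {u : ℕ → ℝ | ∀ i < n, u i ∉ Set.Ioc (c i) (d i)} =
        ⋂ i ∈ Finset.range n, U i ⁻¹' (Set.Ioc (c i) (d i))ᶜ := by
      ext ω
      simp [Finset.mem_range, hV_def]
    rw [hVpre, hUindep.meas_biInter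
      (fun i _ => ⟨(Set.Ioc (c i) (d i))ᶜ, measurableSet_Ioc.compl, rfl⟩)]
    have hfac : ∀ i, ENNReal.ofReal (1 - δ) ≤ P (U i ⁻¹' (Set.Ioc (c i) (d i))ᶜ) := by
      intro i
      have h1 : P (U i ⁻¹' (Set.Ioc (c i) (d i))ᶜ) =
          (volume.restrict (Set.Icc (0:ℝ) 1)) (Set.Ioc (c i) (d i))ᶜ := by
        rw [← Measure.map_apply (hUmeas i) measurableSet_Ioc.compl, hUunif i]
      have hsub : Set.Ioc (c i) (d i) ⊆ Set.Icc (0:ℝ) 1 := by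
        intro u hu
       
        exact ⟨le_trans (le_min (hα (β i)).1 (hα' (β i)).1) (le_of_lt hu.1),
          le_trans hu.2 (max_le (hα (β i)).2 (hα' (β i)).2)⟩
      have h2 : (volume.restrict (Set.Icc (0:ℝ) 1)) (Set.Ioc (c i) (d i)) =
          ENNReal.ofReal (d i - c i) := by
        rw [Measure.restrict_apply measurableSet_Ioc, Set.inter_eq_left.2 hsub, Real.volume_Ioc]
      have h3 : (volume.restrict (Set.Icc (0:ℝ) 1)) (Set.Ioc (c i) (d i))ᶜ =
          1 - ENNReal.ofReal (d i - c i) := by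
        rw [measure_compl measurableSet_Ioc (measure_ne_top _ _), h2]
        congr 1
        simp [Real.volume_Icc]
      have hdc : d i - c i ≤ δ := by
        rw [hd, hc, max_sub_min_eq_abs, abs_sub_comm]; exact hdiff (β i)
      have hdc0 : 0 ≤ d i - c i := sub_nonneg.2 (min_le_max)
      rw [h1, h3]
      calc ENNReal.ofReal (1 - δ) ≤ ENNReal.ofReal (1 - (d i - c i)) :=
            ENNReal.ofReal_le_ofReal (by linarith)
        _ = ENNReal.ofReal 1 - ENNReal.ofReal (d i - c i) := ENNReal.ofReal_sub _ hdc0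
        _ = 1 - ENNReal.ofReal (d i - c i) := by rw [ENNReal.ofReal_one]
    calc ENNReal.ofReal ((1 - δ) ^ n) = (ENNReal.ofReal (1 - δ)) ^ n := ENNReal.ofReal_pow hδ0 n
      _ = ∏ _i ∈ Finset.range n, ENNReal.ofReal (1 - δ) := by
          rw [Finset.prod_const, Finset.card_range]
      _ ≤ ∏ i ∈ Finset.range n, P (U i ⁻¹' (Set.Ioc (c i) (d i))ᶜ) :=
          Finset.prod_le_prod' fun i _ => hfac i
  -- the main lower bound on P A
  have hmain : ∫⁻ ω, ENNReal.ofReal ((1 - δ) ^ N ω) ∂P ≤ P A := by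
    have hmeasf : Measurable fun y : ℕ × (ℕ → ℝ) => ENNReal.ofReal ((1 - δ) ^ y.1) :=
      (measurable_from_top (f := fun n : ℕ => ENNReal.ofReal ((1 - δ) ^ n))).comp measurable_fst
    calc ∫⁻ ω, ENNReal.ofReal ((1 - δ) ^ N ω) ∂P
        = ∫⁻ y, ENNReal.ofReal ((1 - δ) ^ y.1) ∂(P.map T) := by
          rw [lintegral_map hmeasf hT]
      _ ≤ ∫⁻ y, (P.map V) (Prod.mk y ⁻¹' S) ∂(P.map T) := lintegral_mono hsection
      _ = P A := hPA.symm
  -- convert to the Bochner integral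
  have hint : ∫ ω, (1 - δ) ^ N ω ∂P ≤ (P A).toReal := by
    have hnn : 0 ≤ᵐ[P] fun ω => (1 - δ) ^ N ω :=
      Filter.Eventually.of_forall fun ω => pow_nonneg hδ0 _
    have hm : AEStronglyMeasurable (fun ω => (1 - δ) ^ N ω) P :=
      ((measurable_from_top (f := fun n : ℕ => (1 - δ) ^ n)).comp hN).aestronglyMeasurable
    rw [integral_eq_lintegral_of_nonneg_ae hnn hm]
    exact ENNReal.toReal_mono (measure_ne_top P A) hmain
  -- part 1: the cdf distance is bounded by P Aᶜ
  set E := {ω | X ω ≤ x} with hE_def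
  set F := {ω | X' ω ≤ x} with hF_def
  have hsub1 : E ⊆ F ∪ Aᶜ := by
    intro ω hω
    by_cases hA' : ω ∈ A
    · exact Or.inl (by rw [hF_def, Set.mem_setOf_eq, ← hagree ω hA']; exact hω)
    · exact Or.inr hA'
  have hsub2 : F ⊆ E ∪ Aᶜ := by
    intro ω hω
    by_cases hA' : ω ∈ A
    · exact Or.inl (by rw [hE_def, Set.mem_setOf_eq, hagree ω hA']; exact hω)
    · exact Or.inr hA'
  have key : ∀ (G H : Set Ω), G ⊆ H ∪ Aᶜ →
      (P G).toReal - (P H).toReal ≤ (P Aᶜ).toReal := by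
    intro G H hGH
    have h1 : P G ≤ P H + P Aᶜ := le_trans (measure_mono hGH) (measure_union_le _ _)
    have h2 : (P G).toReal ≤ (P H).toReal + (P Aᶜ).toReal := by
      rw [← ENNReal.toReal_add (measure_ne_top _ _) (measure_ne_top _ _)]
      exact ENNReal.toReal_mono (by finiteness) h1
    linarith
  have habs : |(P E).toReal - (P F).toReal| ≤ (P Aᶜ).toReal :=
    abs_sub_le_iff.2 ⟨key E F hsub1, key F E hsub2⟩
  have hcompl : (P Aᶜ).toReal = 1 - (P A).toReal := by
    rw [measure_compl hAmeas (measure_ne_top _ _), measure_univ,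
      ENNReal.toReal_sub_of_le prob_le_one ENNReal.one_ne_top, ENNReal.toReal_one]
  calc |(P E).toReal - (P F).toReal| ≤ (P Aᶜ).toReal := habs
    _ = 1 - (P A).toReal := hcompl
    _ ≤ 1 - ∫ ω, (1 - δ) ^ N ω ∂P := by linarith
end

section
/- Let (Ω, 𝓕, P) be a probability space, let T : Ω → [0,∞] be measurable, and let (B_n)_{n∈ℕ} and (I_n)_{n∈ℕ} be sequences of real-valued random variables such that, for each n, I_n is independent of B_n and the law of I_n has no atoms. Suppose that for every t > 0, almost surely, T = t implies that B_n + I_n = t for some n ∈ ℕ. Then P(T = t) = 0 for every t > 0, and consequently the distribution function t ↦ P(T ≤ t) is continuous on (0, ∞). (This is the abstract content of Theorem 5 of the paper: if the lifetime random variable of the branching process is continuous, then the distribution function v_α of the time to extinction T_α is continuous, since the extinction time can only equal a death time B_n + I_n.) -/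
open MeasureTheory ProbabilityTheory Filter
open scoped ENNReal Topology

/-- If `X` and `Y` are independent real random variables and the law of `Y` has no atoms,
then `X + Y` hits any given value with probability zero. -/
lemma add_eq_null_of_indep {Ω : Type*} [MeasurableSpace Ω] (P : Measure Ω)
    [IsProbabilityMeasure P] {X Y : Ω → ℝ} (hX : Measurable X) (hY : Measurable Y)
    (hindep : IndepFun X Y P) (hatom : ∀ t : ℝ, P.map Y {t} = 0) (t : ℝ) :
    P {ω | X ω + Y ω = t} = 0 := by
  have hmap : P.map (fun ω => (X ω, Y ω)) = (P.map X).prod (P.map Y) :=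
    (indepFun_iff_map_prod_eq_prod_map_map hX.aemeasurable hY.aemeasurable).mp hindep
  have hset : MeasurableSet {p : ℝ × ℝ | p.1 + p.2 = t} :=
    (measurable_fst.add measurable_snd) (measurableSet_singleton t)
  have h1 : P {ω | X ω + Y ω = t}
      = (P.map (fun ω => (X ω, Y ω))) {p : ℝ × ℝ | p.1 + p.2 = t} := by
    rw [Measure.map_apply (hX.prodMk hY) hset]
    rfl
  rw [h1, hmap, Measure.prod_apply hset]
  have hz : ∀ x : ℝ, (P.map Y) {a : ℝ | x + a = t} = 0 := by
    intro x
    have : {a : ℝ | x + a = t} = {t - x} := by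
      ext y
      simp only [Set.mem_preimage, Set.mem_setOf_eq, Set.mem_singleton_iff]
      constructor <;> intro h <;> linarith
    rw [this]
    exact hatom _
  simp [hz]

/-- Abstract content of Theorem 5 of the paper: if a measurable random time
`T : Ω → [0,∞]` can, for every `t > 0`, only equal `t` when some death time `Bₙ + Iₙ`
equals `t` (almost surely), where each lifetime `Iₙ` is independent of the birth time `Bₙ`
and has atomless law, then `P(T = t) = 0` for every `t > 0` and the distribution function
`t ↦ P(T ≤ t)` is continuous on `(0, ∞)`. -/
theorem extinctionTime_cdf_continuous {Ω : Type*} [MeasurableSpace Ω]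
    (P : Measure Ω) [IsProbabilityMeasure P]
    (T : Ω → ℝ≥0∞) (hT : Measurable T)
    (B I : ℕ → Ω → ℝ) (hB : ∀ n, Measurable (B n)) (hI : ∀ n, Measurable (I n))
    (hindep : ∀ n, IndepFun (B n) (I n) P)
    (hatoms : ∀ n, ∀ t : ℝ, P.map (I n) {t} = 0)
    (hdeath : ∀ t : ℝ, 0 < t →
      ∀ᵐ ω ∂P, T ω = ENNReal.ofReal t → ∃ n : ℕ, B n ω + I n ω = t) :
    (∀ t : ℝ, 0 < t → P {ω | T ω = ENNReal.ofReal t} = 0) ∧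
      ContinuousOn (fun t : ℝ => (P {ω | T ω ≤ ENNReal.ofReal t}).toReal) (Set.Ioi 0) := by
  -- Part 1: no atoms of T at positive times
  have part1 : ∀ t : ℝ, 0 < t → P {ω | T ω = ENNReal.ofReal t} = 0 := by
    intro t ht
    have hsub : {ω | T ω = ENNReal.ofReal t} ≤ᵐ[P] ⋃ n, {ω | B n ω + I n ω = t} := by
      filter_upwards [hdeath t ht] with ω h hω
      exact Set.mem_iUnion.2 (h hω)
    have hle := measure_mono_ae hsub
    have h0 : P (⋃ n, {ω | B n ω + I n ω = t}) = 0 :=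
      measure_iUnion_null fun n =>
        add_eq_null_of_indep P (hB n) (hI n) (hindep n) (hatoms n) t
    exact le_antisymm (hle.trans h0.le) (zero_le)
  refine ⟨part1, ?_⟩
  set F : ℝ → ℝ := fun t => (P {ω | T ω ≤ ENNReal.ofReal t}).toReal with hF
  have hmeas : ∀ c : ℝ≥0∞, MeasurableSet {ω | T ω ≤ c} := fun c => hT measurableSet_Iic
  have hmono : ∀ {s u : ℝ}, s ≤ u →
      P {ω | T ω ≤ ENNReal.ofReal s} ≤ P {ω | T ω ≤ ENNReal.ofReal u} := fun {s u} hsu =>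
    measure_mono fun ω h => le_trans h (ENNReal.ofReal_le_ofReal hsu)
  have hFmono : Monotone F := fun s u hsu =>
    ENNReal.toReal_mono (measure_ne_top P _) (hmono hsu)
  -- continuity at each t₀ > 0
  have hcont : ∀ t₀ : ℝ, 0 < t₀ → ContinuousAt F t₀ := by
    intro t₀ ht₀
    set A : ℕ → Set Ω := fun n => {ω | T ω ≤ ENNReal.ofReal (t₀ + 1 / (n + 1))} with hA
    set C : ℕ → Set Ω := fun n => {ω | T ω ≤ ENNReal.ofReal (t₀ - 1 / (n + 1))} with hC
    have hAanti : Antitone A := by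
      intro n m hnm ω h
      refine le_trans h (ENNReal.ofReal_le_ofReal ?_)
      have h1 : (1 : ℝ) / (m + 1) ≤ 1 / (n + 1) := by
        apply one_div_le_one_div_of_le (by positivity)
        exact_mod_cast add_le_add_left (Nat.cast_le.mpr hnm) 1
      linarith
    have hCmono : Monotone C := by
      intro n m hnm ω h
      refine le_trans h (ENNReal.ofReal_le_ofReal ?_)
      have h1 : (1 : ℝ) / (m + 1) ≤ 1 / (n + 1) := by
        apply one_div_le_one_div_of_le (by positivity)
        exact_mod_cast add_le_add_left (Nat.cast_le.mpr hnm) 1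
      linarith
    have hAint : (⋂ n, A n) = {ω | T ω ≤ ENNReal.ofReal t₀} := by
      ext ω
      simp only [Set.mem_iInter, hA, Set.mem_setOf_eq]
      constructor
      · intro h
        refine ENNReal.le_of_forall_pos_le_add fun ε hε _ => ?_
        obtain ⟨n, hn⟩ := exists_nat_one_div_lt (show (0:ℝ) < (ε:ℝ) from hε)
        calc T ω ≤ ENNReal.ofReal (t₀ + 1 / (n + 1)) := h n
          _ ≤ ENNReal.ofReal t₀ + ENNReal.ofReal (1 / (n + 1)) := ENNReal.ofReal_add_le
          _ ≤ ENNReal.ofReal t₀ + (ε : ℝ≥0∞) := by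
              gcongr
              rw [← ENNReal.ofReal_coe_nnreal]
              exact ENNReal.ofReal_le_ofReal hn.le
      · intro h n
        have h1 : (0:ℝ) < 1 / (n + 1) := by positivity
        exact le_trans h (ENNReal.ofReal_le_ofReal (by linarith))
    have hCun : (⋃ n, C n) = {ω | T ω < ENNReal.ofReal t₀} := by
      ext ω
      simp only [Set.mem_iUnion, hC, Set.mem_setOf_eq]
      constructor
      · rintro ⟨n, hn⟩
        refine lt_of_le_of_lt hn (ENNReal.ofReal_lt_ofReal_iff ht₀ |>.mpr ?_)
        have : (0:ℝ) < 1 / (n + 1) := by positivity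
        linarith
      · intro h
        have hne : T ω ≠ ∞ := (h.trans_le le_top).ne
        have ha : (T ω).toReal < t₀ := by
          have := ENNReal.toReal_lt_toReal hne ENNReal.ofReal_ne_top |>.mpr h
          rwa [ENNReal.toReal_ofReal ht₀.le] at this
        obtain ⟨n, hn⟩ := exists_nat_one_div_lt (sub_pos.mpr ha)
        refine ⟨n, ?_⟩
        calc T ω = ENNReal.ofReal (T ω).toReal := (ENNReal.ofReal_toReal hne).symm
          _ ≤ ENNReal.ofReal (t₀ - 1 / (n + 1)) := ENNReal.ofReal_le_ofReal (by linarith)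
    have hlt_eq : P {ω | T ω < ENNReal.ofReal t₀} = P {ω | T ω ≤ ENNReal.ofReal t₀} := by
      refine le_antisymm (measure_mono fun ω (h : T ω < ENNReal.ofReal t₀) => h.le) ?_
      have hsub : {ω | T ω ≤ ENNReal.ofReal t₀} ⊆
          {ω | T ω < ENNReal.ofReal t₀} ∪ {ω | T ω = ENNReal.ofReal t₀} := by
        intro ω (h : T ω ≤ ENNReal.ofReal t₀)
        exact lt_or_eq_of_le h
      calc P {ω | T ω ≤ ENNReal.ofReal t₀}
          ≤ P ({ω | T ω < ENNReal.ofReal t₀} ∪ {ω | T ω = ENNReal.ofReal t₀}) :=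
            measure_mono hsub
        _ ≤ P {ω | T ω < ENNReal.ofReal t₀} + P {ω | T ω = ENNReal.ofReal t₀} :=
            measure_union_le _ _
        _ = P {ω | T ω < ENNReal.ofReal t₀} := by rw [part1 t₀ ht₀, add_zero]
    -- limits of measures
    have hAtendsto : Tendsto (fun n => P (A n)) atTop (𝓝 (P {ω | T ω ≤ ENNReal.ofReal t₀})) := by
      have := tendsto_measure_iInter_atTop (μ := P) (s := A)
        (fun n => (hmeas _).nullMeasurableSet) hAanti ⟨0, measure_ne_top P _⟩
      rwa [hAint] at this
    have hCtendsto : Tendsto (fun n => P (C n)) atTop (𝓝 (P {ω | T ω ≤ ENNReal.ofReal t₀})) := by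
      have := tendsto_measure_iUnion_atTop (μ := P) (s := C) hCmono
      rwa [hCun, hlt_eq] at this
    -- pass to real numbers
    have hr : Tendsto (fun n : ℕ => F (t₀ + 1 / (n + 1))) atTop (𝓝 (F t₀)) :=
      (ENNReal.tendsto_toReal (measure_ne_top P _)).comp hAtendsto
    have hl : Tendsto (fun n : ℕ => F (t₀ - 1 / (n + 1))) atTop (𝓝 (F t₀)) :=
      (ENNReal.tendsto_toReal (measure_ne_top P _)).comp hCtendsto
    rw [Metric.continuousAt_iff]
    intro ε hε
    obtain ⟨N₁, hN₁⟩ := Metric.tendsto_atTop.mp hr ε hε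
    obtain ⟨N₂, hN₂⟩ := Metric.tendsto_atTop.mp hl ε hε
    set N := max N₁ N₂
    have hδ : (0:ℝ) < 1 / (N + 1) := by positivity
    refine ⟨1 / (N + 1), hδ, fun {x} hx => ?_⟩
    rw [Real.dist_eq] at hx ⊢
    have hxu : x ≤ t₀ + 1 / (N + 1) := by
      have := abs_lt.mp hx
      linarith [this.2]
    have hxl : t₀ - 1 / (N + 1) ≤ x := by
      have := abs_lt.mp hx
      linarith [this.1]
    have h1 : F x - F t₀ < ε := by
      have hb := hN₁ N (le_max_left _ _)
      rw [Real.dist_eq] at hb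
      have := hFmono hxu
      have habs := (abs_lt.mp hb).2
      linarith
    have h2 : F t₀ - F x < ε := by
      have hb := hN₂ N (le_max_right _ _)
      rw [Real.dist_eq] at hb
      have := hFmono hxl
      have habs := (abs_lt.mp hb).1
      linarith
    exact abs_lt.mpr ⟨by linarith, h1⟩
  exact fun t ht => (hcont t ht).continuousWithinAt
end
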